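/- Conditional approximation lemma (Lemma 2 of the paper): Let X be an N×M real matrix with a cost function V on submatrices satisfying the refinement subadditivity V_R(Y) ≤ V(Y) and V_C(Y) ≤ V(Y) for every submatrix Y. Let R and C be row and column partitions minimizing L_R = Σ_{R∈R} Σ_j V(X(R,{j})) and L_C = Σ_i Σ_{C∈C} V(X({i},C)) respectively, and let L = Σ_{R∈R} Σ_{C∈C} V(X(R,C)). Suppose α ≥ 0 is such that for every submatrix Y = X(R,C) with R ∈ R, C ∈ C, one has V(Y) ≤ (α/2)(V_R(Y) + V_C(Y)). Then L ≤ α·L*, where L* is the minimum of Σ_{R*∈R*} Σ_{C*∈C*} V(X(R*,C*)) over all pairs of row/column partitions into K_r and K_c parts. -/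
import Mathlib


open Finset in
/-- Conditional approximation lemma: if every induced bicluster Y of the independent
one-way solution satisfies V(Y) ≤ (α/2)(V_R(Y) + V_C(Y)), then L ≤ α L*. -/
theorem conditional_approximation (N M Kr Kc : ℕ)
    (V : Finset (Fin N) → Finset (Fin M) → ℝ)
    (hV0 : ∀ R C, 0 ≤ V R C)
    (hcol : ∀ R C, ∑ j ∈ C, V R {j} ≤ V R C)
    (hrow : ∀ R C, ∑ i ∈ R, V {i} C ≤ V R C)
    (ρ : Fin N → Fin Kr) (γ : Fin M → Fin Kc)
    (hρ : ∀ ρ' : Fin N → Fin Kr,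
      ∑ k, ∑ j : Fin M, V (Finset.univ.filter (fun i => ρ i = k)) {j} ≤
        ∑ k, ∑ j : Fin M, V (Finset.univ.filter (fun i => ρ' i = k)) {j})
    (hγ : ∀ γ' : Fin M → Fin Kc,
      ∑ i : Fin N, ∑ l, V {i} (Finset.univ.filter (fun j => γ j = l)) ≤
        ∑ i : Fin N, ∑ l, V {i} (Finset.univ.filter (fun j => γ' j = l)))
    (α : ℝ) (hα : 0 ≤ α)
    (hbic : ∀ k l,
      V (Finset.univ.filter (fun i => ρ i = k)) (Finset.univ.filter (fun j => γ j = l)) ≤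
        α / 2 *
          ((∑ j ∈ Finset.univ.filter (fun j => γ j = l),
              V (Finset.univ.filter (fun i => ρ i = k)) {j}) +
            (∑ i ∈ Finset.univ.filter (fun i => ρ i = k),
              V {i} (Finset.univ.filter (fun j => γ j = l)))))
    (ρs : Fin N → Fin Kr) (γs : Fin M → Fin Kc) :
    ∑ k, ∑ l,
        V (Finset.univ.filter (fun i => ρ i = k)) (Finset.univ.filter (fun j => γ j = l)) ≤
      α * ∑ k, ∑ l,
        V (Finset.univ.filter (fun i => ρs i = k)) (Finset.univ.filter (fun j => γs j = l)) := by
  set Rk := fun k => Finset.univ.filter (fun i => ρ i = k) with hRk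
  set Cl := fun l => Finset.univ.filter (fun j => γ j = l) with hCl
  set Rs := fun k => Finset.univ.filter (fun i => ρs i = k) with hRs
  set Cs := fun l => Finset.univ.filter (fun j => γs j = l) with hCs
  have hLR : (∑ k, ∑ j : Fin M, V (Rk k) {j}) ≤ ∑ k, ∑ l, V (Rs k) (Cs l) := by
    refine le_trans (hρ ρs) ?_
    refine Finset.sum_le_sum fun k _ => ?_
    calc ∑ j : Fin M, V (Rs k) {j}
        = ∑ l, ∑ j ∈ Finset.univ.filter (fun j => γs j = l), V (Rs k) {j} := by
          rw [Finset.sum_fiberwise]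
      _ ≤ ∑ l, V (Rs k) (Cs l) := by
          exact Finset.sum_le_sum fun l _ => hcol (Rs k) (Cs l)
  have hLC : (∑ i : Fin N, ∑ l, V {i} (Cl l)) ≤ ∑ k, ∑ l, V (Rs k) (Cs l) := by
    refine le_trans (hγ γs) ?_
    have hsc : (∑ k, ∑ l, V (Rs k) (Cs l)) = ∑ l, ∑ k, V (Rs k) (Cs l) := Finset.sum_comm
    have hsc2 : (∑ i : Fin N, ∑ l, V {i} (Cs l)) = ∑ l, ∑ i : Fin N, V {i} (Cs l) :=
      Finset.sum_comm
    rw [hsc, hsc2]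
    refine Finset.sum_le_sum fun l _ => ?_
    calc ∑ i : Fin N, V {i} (Cs l)
        = ∑ k, ∑ i ∈ Finset.univ.filter (fun i => ρs i = k), V {i} (Cs l) := by
          rw [Finset.sum_fiberwise]
      _ ≤ ∑ k, V (Rs k) (Cs l) := by
          exact Finset.sum_le_sum fun k _ => hrow (Rs k) (Cs l)
  calc ∑ k, ∑ l, V (Rk k) (Cl l)
      ≤ ∑ k, ∑ l, α / 2 * ((∑ j ∈ Cl l, V (Rk k) {j}) + ∑ i ∈ Rk k, V {i} (Cl l)) :=
        Finset.sum_le_sum fun k _ => Finset.sum_le_sum fun l _ => hbic k l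
    _ = α / 2 * (∑ k, ∑ l, ∑ j ∈ Cl l, V (Rk k) {j}) +
        α / 2 * (∑ k, ∑ l, ∑ i ∈ Rk k, V {i} (Cl l)) := by
        simp only [mul_add, Finset.sum_add_distrib, Finset.mul_sum]
    _ = α / 2 * ((∑ k, ∑ j : Fin M, V (Rk k) {j}) + ∑ i : Fin N, ∑ l, V {i} (Cl l)) := by
        rw [mul_add]
        congr 1
        · congr 1
          exact Finset.sum_congr rfl fun k _ => Finset.sum_fiberwise _ _ _
        · congr 1
          rw [Finset.sum_comm]
          rw [show (∑ l, ∑ k, ∑ i ∈ Rk k, V {i} (Cl l)) = ∑ l, ∑ i : Fin N, V {i} (Cl l) from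
            Finset.sum_congr rfl fun l _ => Finset.sum_fiberwise _ _ _]
          exact Finset.sum_comm
    _ ≤ α / 2 * ((∑ k, ∑ l, V (Rs k) (Cs l)) + ∑ k, ∑ l, V (Rs k) (Cs l)) := by
        apply mul_le_mul_of_nonneg_left (add_le_add hLR hLC) (by positivity)
    _ = α * ∑ k, ∑ l, V (Rs k) (Cs l) := by ring
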